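/- If ω ∈ S_n contains a 3412-pattern witnessed by indices i < j < k < l (so ω(k) < ω(l) < ω(i) < ω(j)), then c_i(ω) ≥ 2, c_j(ω) ≥ 2, and m_{i, c_i(ω)−1}(ω) > m_{j,1}(ω) in the componentwise order on ℕ^n. -/
import Mathlib


open Finset

/-- `c_i(ω)`: the number of `j > i` with `ω i > ω j` (the Lehmer code entries). -/
def lehmer {n : ℕ} (ω : Equiv.Perm (Fin n)) (i : Fin n) : ℕ :=
  (univ.filter fun j => i < j ∧ ω j < ω i).card

/-- `c_{i,j}(ω)`: the number of `k` with `i < k < j` and `ω i > ω k`. -/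
def cij {n : ℕ} (ω : Equiv.Perm (Fin n)) (i j : Fin n) : ℕ :=
  (univ.filter fun k => i < k ∧ k < j ∧ ω k < ω i).card

/-- `m_{i,x}(ω) ∈ ℕ^n`, defined coordinatewise. -/
def mvec {n : ℕ} (ω : Equiv.Perm (Fin n)) (i : Fin n) (x : ℕ) : Fin n → ℕ :=
  fun j => if j < i then 0 else if j = i then x
    else if ω j < ω i then 0 else x - cij ω i j

lemma key_lemma {n : ℕ} (ω : Equiv.Perm (Fin n)) (a k l : Fin n)
    (hak : a < k) (hkl : k < l) (hka : ω k < ω a) (hla : ω l < ω a)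
    (t : Fin n) (htk : t ≤ k) : cij ω a t + 2 ≤ lehmer ω a := by
  classical
  set S : Finset (Fin n) := univ.filter fun s => a < s ∧ s < t ∧ ω s < ω a with hS
  have hkS : k ∉ S := by
    simp only [hS, mem_filter]
    rintro ⟨-, -, hkt, -⟩
    exact absurd hkt (not_lt.2 htk)
  have hlS : l ∉ S := by
    simp only [hS, mem_filter]
    rintro ⟨-, -, hlt, -⟩
    exact absurd hlt (not_lt.2 (htk.trans hkl.le))
  have hkl' : k ≠ l := ne_of_lt hkl
  have hkil : k ∉ insert l S := by
    simp [hkl', hkS]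
  have hsub : insert k (insert l S) ⊆ univ.filter fun s => a < s ∧ ω s < ω a := by
    intro s hs
    simp only [mem_insert, hS, mem_filter] at hs ⊢
    rcases hs with rfl | rfl | ⟨-, h1, -, h2⟩
    · exact ⟨mem_univ _, hak, hka⟩
    · exact ⟨mem_univ _, hak.trans hkl, hla⟩
    · exact ⟨mem_univ _, h1, h2⟩
  have hcard : (insert k (insert l S)).card = S.card + 2 := by
    rw [Finset.card_insert_of_notMem hkil, Finset.card_insert_of_notMem hlS]
  have := Finset.card_le_card hsub
  rw [hcard] at this
  simpa [cij, lehmer, hS] using this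

theorem stmt14 (n : ℕ) (ω : Equiv.Perm (Fin n)) (i j k l : Fin n)
    (hij : i < j) (hjk : j < k) (hkl : k < l)
    (h1 : ω k < ω l) (h2 : ω l < ω i) (h3 : ω i < ω j) :
    2 ≤ lehmer ω i ∧ 2 ≤ lehmer ω j ∧
      mvec ω j 1 < mvec ω i (lehmer ω i - 1) := by
  have hik : i < k := hij.trans hjk
  have hki : ω k < ω i := h1.trans h2
  have hkj : ω k < ω j := hki.trans h3
  have hlj : ω l < ω j := h2.trans h3
  have keyi := fun t ht => key_lemma ω i k l hik hkl hki h2 t ht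
  have hli : 2 ≤ lehmer ω i := by
    have := keyi i hik.le
    omega
  have hlj2 : 2 ≤ lehmer ω j := by
    have := key_lemma ω j k l hjk hkl hkj hlj j hjk.le
    omega
  refine ⟨hli, hlj2, ?_⟩
  set x := lehmer ω i - 1 with hx
  have hx1 : 1 ≤ x := by omega
  have hle : mvec ω j 1 ≤ mvec ω i x := by
    intro t
    simp only [mvec]
    by_cases htj : t < j
    · simp only [if_pos htj]
      positivity
    · simp only [if_neg htj]
      by_cases htj' : t = j
      · subst htj'
        have h1 : ¬ t < i := fun h => absurd (h.trans hij) (lt_irrefl _)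
        have h2' : t ≠ i := ne_of_gt hij
        have h3' : ¬ ω t < ω i := not_lt.2 h3.le
        rw [if_pos rfl, if_neg h1, if_neg h2', if_neg h3']
        have := keyi t hjk.le
        omega
      · simp only [if_neg htj']
        by_cases h4 : ω t < ω j
        · simp only [if_pos h4]
          positivity
        · simp only [if_neg h4]
          have hjt : j < t := lt_of_le_of_ne (not_lt.1 htj) (Ne.symm htj')
          have hit : i < t := hij.trans hjt
          have h5 : ¬ t < i := not_lt.2 hit.le
          have h6 : t ≠ i := ne_of_gt hit
          have h7 : ¬ ω t < ω i := not_lt.2 (h3.le.trans (not_lt.1 h4))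
          simp only [if_neg h5, if_neg h6, if_neg h7]
          by_cases h8 : cij ω j t = 0
          · -- then k is not in the window, so t ≤ k
            have htk : t ≤ k := by
              by_contra hc
              push_neg at hc
              have hkmem : k ∈ univ.filter fun s => j < s ∧ s < t ∧ ω s < ω j := by
                simp [hjk, hc, hkj]
              have : 0 < cij ω j t := Finset.card_pos.2 ⟨k, hkmem⟩
              omega
            have := keyi t htk
            omega
          · omega
  refine lt_of_le_of_ne hle (fun h => ?_)
  have := congrFun h i
  simp [mvec, hij] at this
  omega
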